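/- Invariant circles around periodic points. Assume λ is irrational. Let p ∈ ℍ and k ≥ 1 satisfy F^k(p) = p and F^j(p) ∉ ∂𝒫 for all 0 ≤ j ≤ k, where ∂𝒫 is the union of the topological boundaries in ℂ of the cones P_0,…,P_{d+1}. Then there exists ε > 0 such that for every 0 < δ < ε the set S_δ = ⋃_{r=0}^{k−1} {z ∈ ℂ : |z − F^r(p)| = δ} satisfies F(S_δ) = S_δ. Moreover, for every z ∈ S_δ the closure of the forward F-orbit of z equals S_δ if and only if m_1·θ_1 + … + m_d·θ_d is an irrational multiple of π, where m_j = card{0 ≤ i < k : F^i(p) ∈ P_j}. -/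

import Mathlib

open Complex Real Set
open scoped Classical

noncomputable section

/-- The reciprocal golden ratio Φ = (√5 − 1)/2. -/
def Phi : ℝ := (Real.sqrt 5 - 1) / 2

/-- β = (π − |α|)/2. -/
def beta {d : ℕ} (α : Fin d → ℝ) : ℝ := (π - ∑ k, α k) / 2

/-- σ_j = β + α_1 + … + α_j (partial sums of the angles, shifted by β). -/
def sig {d : ℕ} (α : Fin d → ℝ) (j : ℕ) : ℝ :=
  beta α + ∑ k ∈ Finset.univ.filter (fun k : Fin d => (k : ℕ) < j), α k

/-- θ_j = Σ_{τ(k)<τ(j)} α_k − Σ_{k<j} α_k. -/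
def theta {d : ℕ} (α : Fin d → ℝ) (τ : Equiv.Perm (Fin d)) (j : Fin d) : ℝ :=
  (∑ k ∈ Finset.univ.filter (fun k : Fin d => τ k < τ j), α k)
  - ∑ k ∈ Finset.univ.filter (fun k : Fin d => k < j), α k

/-- The cone P_0 = {z ∈ ℍ : arg z ∈ [0, β)}. -/
def P0 {d : ℕ} (α : Fin d → ℝ) : Set ℂ :=
  {z : ℂ | 0 ≤ z.im ∧ 0 ≤ z.arg ∧ z.arg < beta α}

/-- The middle cones P_1, …, P_d (0-indexed by `j : Fin d`):
P_1 corresponds to arg ∈ [β, β+α_1], and P_j (j ≥ 2) to arg ∈ (σ_{j−1}, σ_j]. -/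
def Pmid {d : ℕ} (α : Fin d → ℝ) (j : Fin d) : Set ℂ :=
  {z : ℂ | 0 ≤ z.im ∧
    (if (j : ℕ) = 0 then sig α 0 ≤ z.arg else sig α (j : ℕ) < z.arg) ∧
    z.arg ≤ sig α ((j : ℕ) + 1)}

/-- The cone P_{d+1} = {z ∈ ℍ : arg z ∈ (π−β, π]}. -/
def Pend {d : ℕ} (α : Fin d → ℝ) : Set ℂ :=
  {z : ℂ | 0 ≤ z.im ∧ π - beta α < z.arg ∧ z.arg ≤ π}

/-- The middle cone P_c = P_1 ∪ … ∪ P_d. -/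
def Pc {d : ℕ} (α : Fin d → ℝ) : Set ℂ := ⋃ j, Pmid α j

/-- The exchange map E. -/
def Emap {d : ℕ} (α : Fin d → ℝ) (τ : Equiv.Perm (Fin d)) (z : ℂ) : ℂ :=
  if h : ∃ j, z ∈ Pmid α j then
    z * Complex.exp ((theta α τ h.choose : ℝ) * Complex.I)
  else z

/-- The translation map G. -/
def Gmap {d : ℕ} (α : Fin d → ℝ) (lam eta : ℝ) (z : ℂ) : ℂ :=
  if z ∈ P0 α then z - 1
  else if z ∈ Pend α then z + (lam : ℂ)
  else if z ∈ Pc α then z - (eta : ℂ)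
  else z

/-- The translated cone exchange F = G ∘ E. -/
def Fmap {d : ℕ} (α : Fin d → ℝ) (τ : Equiv.Perm (Fin d)) (lam eta : ℝ) (z : ℂ) : ℂ :=
  Gmap α lam eta (Emap α τ z)

/-- The set of positive times at which the orbit of z visits P_c. -/
def hitSet {d : ℕ} (α : Fin d → ℝ) (τ : Equiv.Perm (Fin d)) (lam eta : ℝ) (z : ℂ) : Set ℕ :=
  {n : ℕ | 0 < n ∧ (Fmap α τ lam eta)^[n] z ∈ Pc α}

/-- The first hitting time k(z) of z to P_c (0 if the orbit never returns). -/
def hitTime {d : ℕ} (α : Fin d → ℝ) (τ : Equiv.Perm (Fin d)) (lam eta : ℝ) (z : ℂ) : ℕ :=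
  sInf (hitSet α τ lam eta z)

/-- The first return map R(z) = F^{k(z)}(z). -/
def Rmap {d : ℕ} (α : Fin d → ℝ) (τ : Equiv.Perm (Fin d)) (lam eta : ℝ) (z : ℂ) : ℂ :=
  (Fmap α τ lam eta)^[hitTime α τ lam eta z] z

/-- The union ∂𝒫 of the topological boundaries of the cones P_0, …, P_{d+1}. -/
def boundaryP {d : ℕ} (α : Fin d → ℝ) : Set ℂ :=
  frontier (P0 α) ∪ frontier (Pend α) ∪ ⋃ j, frontier (Pmid α j)

/-- The union of circles of radius δ centered at the k points of the orbit of p. -/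
def orbitCircles {d : ℕ} (α : Fin d → ℝ) (τ : Equiv.Perm (Fin d)) (lam eta : ℝ)
    (p : ℂ) (k : ℕ) (δ : ℝ) : Set ℂ :=
  ⋃ r ∈ Finset.range k, Metric.sphere ((Fmap α τ lam eta)^[r] p) δ

/-- The number of visits of the first k iterates of p to the cone P_j. -/
def visitCount {d : ℕ} (α : Fin d → ℝ) (τ : Equiv.Perm (Fin d)) (lam eta : ℝ)
    (p : ℂ) (k : ℕ) (j : Fin d) : ℕ :=
  ((Finset.range k).filter (fun i => (Fmap α τ lam eta)^[i] p ∈ Pmid α j)).card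

namespace TCEaux

variable {d : ℕ} {α : Fin d → ℝ} {τ : Equiv.Perm (Fin d)} {z w : ℂ} {j : Fin d}

lemma sig_mono (hpos : ∀ j, 0 < α j) : Monotone (sig α) := by
  intro m n hmn
  unfold sig
  apply add_le_add_right
  apply Finset.sum_le_sum_of_subset_of_nonneg
  · intro k hk
    simp only [Finset.mem_filter, Finset.mem_univ, true_and] at hk ⊢
    omega
  · intro k _ _
    exact (hpos k).le

lemma sig_zero : sig α 0 = beta α := by
  unfold sig
  simp

lemma sig_d : sig α d = π - beta α := by
  unfold sig beta
  have h : Finset.univ.filter (fun k : Fin d => (k : ℕ) < d) = Finset.univ := by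
    ext k
    simp [k.isLt]
  rw [h]
  ring

lemma sig_succ (j : Fin d) : sig α ((j : ℕ) + 1) = sig α (j : ℕ) + α j := by
  unfold sig
  have h : Finset.univ.filter (fun k : Fin d => (k : ℕ) < (j : ℕ) + 1)
      = insert j (Finset.univ.filter (fun k : Fin d => (k : ℕ) < (j : ℕ))) := by
    ext k
    simp only [Finset.mem_filter, Finset.mem_univ, true_and, Finset.mem_insert]
    constructor
    · intro hk
      rcases Nat.lt_succ_iff_lt_or_eq.1 hk with h | h
      · exact Or.inr h
      · exact Or.inl (Fin.ext h)
    · rintro (rfl | h)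
      · omega
      · omega
  rw [h, Finset.sum_insert (by simp)]
  ring

lemma beta_pos (hsum : ∑ k, α k < π) : 0 < beta α := by
  unfold beta; linarith

lemma beta_le (hpos : ∀ j, 0 < α j) : beta α ≤ π / 2 := by
  have h : (0:ℝ) ≤ ∑ k, α k := Finset.sum_nonneg fun k _ => (hpos k).le
  unfold beta; linarith

lemma sum_eq (hsum : ∑ k, α k < π) : ∑ k, α k = π - 2 * beta α := by
  unfold beta; ring

lemma Pmid_arg_lb (hj : z ∈ Pmid α j) : sig α (j : ℕ) ≤ z.arg := by
  have h := hj.2.1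
  by_cases h0 : (j : ℕ) = 0
  · rw [if_pos h0] at h
    rw [h0]
    exact h
  · rw [if_neg h0] at h
    exact h.le

lemma Pmid_arg_ub (hj : z ∈ Pmid α j) : z.arg ≤ sig α ((j : ℕ) + 1) := hj.2.2

lemma Pmid_ne_zero (hpos : ∀ j, 0 < α j) (hsum : ∑ k, α k < π) (hj : z ∈ Pmid α j) :
    z ≠ 0 := by
  intro h
  have h1 := Pmid_arg_lb hj
  have h2 : sig α 0 ≤ sig α (j : ℕ) := sig_mono hpos (Nat.zero_le _)
  rw [h, Complex.arg_zero] at h1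
  rw [sig_zero] at h2
  have := beta_pos hsum
  linarith

lemma Pmid_unique (hpos : ∀ j, 0 < α j) {j' : Fin d}
    (hj : z ∈ Pmid α j) (hj' : z ∈ Pmid α j') : j = j' := by
  by_contra hne
  have key : ∀ {a b : Fin d}, z ∈ Pmid α a → z ∈ Pmid α b → (a : ℕ) < (b : ℕ) → False := by
    intro a b ha hb hab
    have h1 : z.arg ≤ sig α ((a : ℕ) + 1) := ha.2.2
    have h2 : sig α ((a : ℕ) + 1) ≤ sig α (b : ℕ) := sig_mono hpos hab
    have hb0 : (b : ℕ) ≠ 0 := by omega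
    have h3 : sig α (b : ℕ) < z.arg := by
      have := hb.2.1
      rwa [if_neg hb0] at this
    linarith
  rcases Nat.lt_trichotomy (j : ℕ) (j' : ℕ) with h | h | h
  · exact key hj hj' h
  · exact hne (Fin.ext h)
  · exact key hj' hj h

lemma mem_Pc_of (hd : 1 ≤ d) (hpos : ∀ j, 0 < α j) (w : ℂ) (him : 0 ≤ w.im)
    (h1 : beta α ≤ w.arg) (h2 : w.arg ≤ π - beta α) : w ∈ Pc α := by
  have hsd : sig α d = π - beta α := sig_d
  by_cases hc : w.arg ≤ sig α 1
  · refine Set.mem_iUnion.2 ⟨⟨0, hd⟩, him, ?_, ?_⟩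
    · rw [if_pos rfl, sig_zero]
      exact h1
    · exact hc
  · push_neg at hc
    have hd2 : 2 ≤ d := by
      rcases Nat.lt_or_ge d 2 with h | h
      · exfalso
        have hd1 : d = 1 := by omega
        have e1 : sig α d ≤ sig α 1 := sig_mono hpos (by omega)
        linarith
      · exact h
    have h1d : 1 ≤ d - 1 := by omega
    set P : ℕ → Prop := fun m => sig α m < w.arg with hP
    have hP1 : P 1 := hc
    set j' := Nat.findGreatest P (d - 1) with hj'
    have hspec : P j' := Nat.findGreatest_spec h1d hP1
    have hge : 1 ≤ j' := Nat.le_findGreatest h1d hP1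
    have hle : j' ≤ d - 1 := Nat.findGreatest_le _
    have hub : w.arg ≤ sig α (j' + 1) := by
      rcases Nat.lt_or_ge (j' + 1) d with h | h
      · by_contra hlt
        push_neg at hlt
        exact Nat.findGreatest_is_greatest (Nat.lt_succ_self j') (by omega) hlt
      · have hde : j' + 1 = d := by omega
        rw [hde, hsd]
        exact h2
    refine Set.mem_iUnion.2 ⟨⟨j', by omega⟩, him, ?_, hub⟩
    rw [if_neg (by simp; omega)]
    exact hspec

lemma Pc_arg_lb (hpos : ∀ j, 0 < α j) (hw : w ∈ Pc α) : beta α ≤ w.arg := by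
  obtain ⟨j', hj'⟩ := Set.mem_iUnion.1 hw
  have h1 := Pmid_arg_lb hj'
  have h2 : sig α 0 ≤ sig α (j' : ℕ) := sig_mono hpos (Nat.zero_le _)
  rw [sig_zero] at h2
  linarith

lemma Pc_arg_ub (hpos : ∀ j, 0 < α j) (hw : w ∈ Pc α) : w.arg ≤ π - beta α := by
  obtain ⟨j', hj'⟩ := Set.mem_iUnion.1 hw
  have h1 := Pmid_arg_ub hj'
  have h2 : sig α ((j' : ℕ) + 1) ≤ sig α d := sig_mono hpos j'.isLt
  rw [sig_d] at h2
  linarith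

lemma Pc_not_P0 (hpos : ∀ j, 0 < α j) (hw : w ∈ Pc α) : w ∉ P0 α := by
  intro h
  have := Pc_arg_lb hpos hw
  have := h.2.2
  linarith

lemma Pc_not_Pend (hpos : ∀ j, 0 < α j) (hw : w ∈ Pc α) : w ∉ Pend α := by
  intro h
  have := Pc_arg_ub hpos hw
  have := h.2.1
  linarith

lemma Pend_not_P0 (hpos : ∀ j, 0 < α j) (hw : w ∈ Pend α) : w ∉ P0 α := by
  intro h
  have h1 := hw.2.1
  have h2 := h.2.2
  have h3 := beta_le hpos
  linarith

lemma Pmid_not_mem_P0 (hpos : ∀ j, 0 < α j) (hj : z ∈ Pmid α j) : z ∉ P0 α :=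
  Pc_not_P0 hpos (Set.mem_iUnion.2 ⟨j, hj⟩)

lemma Pmid_not_mem_Pend (hpos : ∀ j, 0 < α j) (hj : z ∈ Pmid α j) : z ∉ Pend α :=
  Pc_not_Pend hpos (Set.mem_iUnion.2 ⟨j, hj⟩)

end TCEaux

namespace TCEaux

variable {d : ℕ} {α : Fin d → ℝ} {τ : Equiv.Perm (Fin d)} {z w : ℂ} {j : Fin d}

lemma rot_arg (z : ℂ) (hz : z ≠ 0) (ψ : ℝ) (h1 : 0 ≤ z.arg + ψ) (h2 : z.arg + ψ ≤ π) :
    (z * Complex.exp ((ψ : ℂ) * Complex.I)).arg = z.arg + ψ ∧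
      0 ≤ (z * Complex.exp ((ψ : ℂ) * Complex.I)).im := by
  have hr : 0 < ‖z‖ := norm_pos_iff.mpr hz
  have key : z * Complex.exp ((ψ : ℂ) * Complex.I)
      = (‖z‖ : ℂ) * Complex.exp (((z.arg + ψ : ℝ) : ℂ) * Complex.I) := by
    conv_lhs => rw [← Complex.norm_mul_exp_arg_mul_I z]
    rw [mul_assoc, ← Complex.exp_add, ← add_mul, ← Complex.ofReal_add]
  constructor
  · rw [key, Complex.exp_mul_I]
    exact Complex.arg_mul_cos_add_sin_mul_I hr ⟨by linarith [Real.pi_pos], h2⟩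
  · have him : ((‖z‖ : ℂ) * Complex.exp (((z.arg + ψ : ℝ) : ℂ) * Complex.I)).im
        = ‖z‖ * Real.sin (z.arg + ψ) := by
      rw [Complex.mul_im, Complex.ofReal_re, Complex.ofReal_im, Complex.exp_ofReal_mul_I_im]
      ring
    rw [key, him]
    exact mul_nonneg hr.le (Real.sin_nonneg_of_nonneg_of_le_pi h1 h2)

lemma theta_bounds (hpos : ∀ j, 0 < α j) (hsum : ∑ k, α k < π) (j : Fin d) :
    beta α ≤ sig α (j : ℕ) + theta α τ j ∧
      sig α ((j : ℕ) + 1) + theta α τ j ≤ π - beta α := by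
  have hfil : (Finset.univ.filter (fun k : Fin d => k < j))
      = Finset.univ.filter (fun k : Fin d => (k : ℕ) < (j : ℕ)) := by
    apply Finset.filter_congr
    intro k _
    exact Fin.lt_iff_val_lt_val
  set S := ∑ k ∈ Finset.univ.filter (fun k : Fin d => τ k < τ j), α k with hSdef
  have h0S : 0 ≤ S := Finset.sum_nonneg fun k _ => (hpos k).le
  have hSub : S + α j ≤ ∑ k, α k := by
    have hins : α j + S = ∑ k ∈ insert j (Finset.univ.filter (fun k : Fin d => τ k < τ j)), α k := by
      rw [Finset.sum_insert (by simp)]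
    calc S + α j = α j + S := by ring
      _ = ∑ k ∈ insert j (Finset.univ.filter (fun k : Fin d => τ k < τ j)), α k := hins
      _ ≤ ∑ k, α k := Finset.sum_le_sum_of_subset_of_nonneg (Finset.subset_univ _)
            (fun k _ _ => (hpos k).le)
  have hth : sig α (j : ℕ) + theta α τ j = beta α + S := by
    simp only [theta, sig, hfil, ← hSdef]
    ring
  have hsig1 : sig α ((j : ℕ) + 1) = sig α (j : ℕ) + α j := sig_succ j
  have hsum' : ∑ k, α k = π - 2 * beta α := by unfold beta; ring
  constructor
  · linarith
  · linarith

lemma E_rot (hd : 1 ≤ d) (hpos : ∀ j, 0 < α j) (hsum : ∑ k, α k < π)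
    (hj : z ∈ Pmid α j) :
    z * Complex.exp ((theta α τ j : ℂ) * Complex.I) ∈ Pc α := by
  have hz : z ≠ 0 := Pmid_ne_zero hpos hsum hj
  have hb := theta_bounds (τ := τ) hpos hsum j
  have hlb := Pmid_arg_lb hj
  have hub := Pmid_arg_ub hj
  have hbp := beta_pos hsum
  have h1 : 0 ≤ z.arg + theta α τ j := by linarith [hb.1]
  have h2 : z.arg + theta α τ j ≤ π := by linarith [hb.2]
  obtain ⟨harg, him⟩ := rot_arg z hz (theta α τ j) h1 h2
  exact mem_Pc_of hd hpos _ him (by rw [harg]; linarith [hb.1]) (by rw [harg]; linarith [hb.2])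

end TCEaux

/-- The local rotation angle of `F` at `q`. -/
def locRot {d : ℕ} (α : Fin d → ℝ) (τ : Equiv.Perm (Fin d)) (q : ℂ) : ℝ :=
  if h : ∃ j, q ∈ Pmid α j then theta α τ h.choose else 0

namespace TCEaux

variable {d : ℕ} {α : Fin d → ℝ} {τ : Equiv.Perm (Fin d)} {z w q : ℂ} {j : Fin d}

lemma locRot_eq (hpos : ∀ j, 0 < α j) (hj : q ∈ Pmid α j) : locRot α τ q = theta α τ j := by
  have h : ∃ j, q ∈ Pmid α j := ⟨j, hj⟩
  rw [locRot, dif_pos h]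
  congr 1
  exact Pmid_unique hpos h.choose_spec hj

lemma locRot_eq_zero (h : ¬∃ j, q ∈ Pmid α j) : locRot α τ q = 0 := dif_neg h

lemma mem_int {X : Type*} [TopologicalSpace X] {s : Set X} {x : X}
    (hx : x ∈ s) (hf : x ∉ frontier s) : x ∈ interior s := by
  have hc : x ∈ closure s := subset_closure hx
  rw [closure_eq_interior_union_frontier] at hc
  rcases hc with h | h
  · exact h
  · exact absurd h hf

lemma not_closure {X : Type*} [TopologicalSpace X] {s : Set X} {x : X}
    (hx : x ∉ s) (hf : x ∉ frontier s) : x ∉ closure s := by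
  rw [closure_eq_interior_union_frontier]
  rintro (h | h)
  · exact hx (interior_subset h)
  · exact hf h

lemma local_form {lam eta : ℝ} (hd : 1 ≤ d) (hpos : ∀ j, 0 < α j) (hsum : ∑ k, α k < π)
    (q : ℂ) (hq : q ∉ boundaryP α) :
    ∃ ε > 0, ∀ z, dist z q < ε →
      Fmap α τ lam eta z
        = Complex.exp ((locRot α τ q : ℂ) * Complex.I) * (z - q) + Fmap α τ lam eta q := by
  have hqP0f : q ∉ frontier (P0 α) := fun h => hq (Or.inl (Or.inl h))
  have hqPef : q ∉ frontier (Pend α) := fun h => hq (Or.inl (Or.inr h))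
  have hqPmf : ∀ j, q ∉ frontier (Pmid α j) := fun j h => hq (Or.inr (Set.mem_iUnion.2 ⟨j, h⟩))
  by_cases hex : ∃ j, q ∈ Pmid α j
  · obtain ⟨j, hj⟩ := hex
    have hloc : locRot α τ q = theta α τ j := locRot_eq hpos hj
    have hint : q ∈ interior (Pmid α j) := mem_int hj (hqPmf j)
    obtain ⟨ε, hε, hball⟩ := Metric.mem_nhds_iff.1 (mem_interior_iff_mem_nhds.1 hint)
    refine ⟨ε, hε, fun z hz => ?_⟩
    have hzj : z ∈ Pmid α j := hball (Metric.mem_ball.2 hz)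
    have keyF : ∀ w, w ∈ Pmid α j →
        Fmap α τ lam eta w = w * Complex.exp ((theta α τ j : ℂ) * Complex.I) - (eta : ℂ) := by
      intro w hw
      have hwex : ∃ j', w ∈ Pmid α j' := ⟨j, hw⟩
      have hE : Emap α τ w = w * Complex.exp ((theta α τ j : ℂ) * Complex.I) := by
        rw [Emap, dif_pos hwex]
        have hch : hwex.choose = j := Pmid_unique hpos hwex.choose_spec hw
        rw [hch]
      have hPc : w * Complex.exp ((theta α τ j : ℂ) * Complex.I) ∈ Pc α :=
        E_rot hd hpos hsum hw
      rw [Fmap, hE, Gmap, if_neg (Pc_not_P0 hpos hPc), if_neg (Pc_not_Pend hpos hPc),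
        if_pos hPc]
    rw [keyF z hzj, keyF q hj, hloc]
    ring
  · have hnotPm : ∀ j, q ∉ Pmid α j := fun j h => hex ⟨j, h⟩
    have hA : ∀ j, q ∉ closure (Pmid α j) := fun j => not_closure (hnotPm j) (hqPmf j)
    have hAopen : IsOpen (⋃ j, closure (Pmid α j))ᶜ :=
      (isClosed_iUnion_of_finite fun j => isClosed_closure).isOpen_compl
    have hqA : q ∈ (⋃ j, closure (Pmid α j))ᶜ := by
      simp only [Set.mem_compl_iff, Set.mem_iUnion, not_exists]
      exact hA
    have hloc0 : locRot α τ q = 0 := locRot_eq_zero hex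
    have hEid : ∀ w, w ∈ (⋃ j, closure (Pmid α j))ᶜ → Emap α τ w = w := by
      intro w hw
      rw [Emap, dif_neg]
      rintro ⟨j, hj⟩
      exact hw (Set.mem_iUnion.2 ⟨j, subset_closure hj⟩)
    have hone : Complex.exp (((0 : ℝ) : ℂ) * Complex.I) = 1 := by
      simp
    by_cases h0 : q ∈ P0 α
    · have hint : q ∈ interior (P0 α) := mem_int h0 hqP0f
      have hO : IsOpen (interior (P0 α) ∩ (⋃ j, closure (Pmid α j))ᶜ) :=
        isOpen_interior.inter hAopen
      obtain ⟨ε, hε, hball⟩ := Metric.isOpen_iff.1 hO q ⟨hint, hqA⟩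
      refine ⟨ε, hε, fun z hz => ?_⟩
      have hzO := hball (Metric.mem_ball.2 hz)
      have key : ∀ w, w ∈ interior (P0 α) ∩ (⋃ j, closure (Pmid α j))ᶜ →
          Fmap α τ lam eta w = w - 1 := by
        intro w hw
        rw [Fmap, hEid w hw.2, Gmap, if_pos (interior_subset hw.1)]
      rw [key z hzO, key q ⟨hint, hqA⟩, hloc0, hone]
      ring
    · by_cases hPe : q ∈ Pend α
      · have hint : q ∈ interior (Pend α) := mem_int hPe hqPef
        have hO : IsOpen (interior (Pend α) ∩ (⋃ j, closure (Pmid α j))ᶜ) :=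
          isOpen_interior.inter hAopen
        obtain ⟨ε, hε, hball⟩ := Metric.isOpen_iff.1 hO q ⟨hint, hqA⟩
        refine ⟨ε, hε, fun z hz => ?_⟩
        have hzO := hball (Metric.mem_ball.2 hz)
        have key : ∀ w, w ∈ interior (Pend α) ∩ (⋃ j, closure (Pmid α j))ᶜ →
            Fmap α τ lam eta w = w + (lam : ℂ) := by
          intro w hw
          rw [Fmap, hEid w hw.2, Gmap, if_neg (Pend_not_P0 hpos (interior_subset hw.1)),
            if_pos (interior_subset hw.1)]
        rw [key z hzO, key q ⟨hint, hqA⟩, hloc0, hone]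
        ring
      · have hc0 : q ∉ closure (P0 α) := not_closure h0 hqP0f
        have hce : q ∉ closure (Pend α) := not_closure hPe hqPef
        have hO : IsOpen ((closure (P0 α))ᶜ ∩ ((closure (Pend α))ᶜ ∩ (⋃ j, closure (Pmid α j))ᶜ)) :=
          isClosed_closure.isOpen_compl.inter (isClosed_closure.isOpen_compl.inter hAopen)
        obtain ⟨ε, hε, hball⟩ := Metric.isOpen_iff.1 hO q ⟨hc0, hce, hqA⟩
        refine ⟨ε, hε, fun z hz => ?_⟩
        have hzO := hball (Metric.mem_ball.2 hz)
        have key : ∀ w, w ∈ (closure (P0 α))ᶜ ∩ ((closure (Pend α))ᶜ ∩ (⋃ j, closure (Pmid α j))ᶜ) →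
            Fmap α τ lam eta w = w := by
          intro w hw
          rw [Fmap, hEid w hw.2.2, Gmap, if_neg (fun h => hw.1 (subset_closure h)),
            if_neg (fun h => hw.2.1 (subset_closure h)), if_neg]
          intro h
          obtain ⟨j, hj⟩ := Set.mem_iUnion.1 h
          exact hw.2.2 (Set.mem_iUnion.2 ⟨j, subset_closure hj⟩)
        rw [key z hzO, key q ⟨hc0, hce, hqA⟩, hloc0, hone]
        ring

lemma nat_mod_periodic {β : Type*} (f : ℕ → β) (P : ℕ) (hP : 0 < P)
    (h : ∀ n, f (n + P) = f n) : ∀ n, f n = f (n % P) := by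
  intro n
  induction n using Nat.strong_induction_on with
  | _ n ih =>
    rcases Nat.lt_or_ge n P with hlt | hge
    · rw [Nat.mod_eq_of_lt hlt]
    · have h1 : n - P + P = n := Nat.sub_add_cancel hge
      calc f n = f (n - P + P) := by rw [h1]
        _ = f (n - P) := h _
        _ = f ((n - P) % P) := ih _ (by omega)
        _ = f (n % P) := by rw [Nat.mod_eq_sub_mod hge]

lemma dense_mod_one {a : ℝ} (ha : Irrational a) (c : ℝ) {ε : ℝ} (hε : 0 < ε) :
    ∃ t : ℕ, ∃ n : ℤ, |t * a - n - c| < ε := by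
  obtain ⟨N, hN⟩ := exists_nat_one_div_lt hε
  obtain ⟨j, k, hk0, hkN, hjk⟩ := Real.exists_int_int_abs_mul_sub_le a (Nat.succ_pos N)
  set ρ := (k : ℝ) * a - j with hρ
  have hρ0 : ρ ≠ 0 := by
    intro h
    have hk : (k : ℝ) ≠ 0 := Int.cast_ne_zero.2 hk0.ne'
    have haeq : a = (j : ℝ) / k := by
      rw [eq_div_iff hk]
      have : (k : ℝ) * a - j = 0 := h
      linarith
    exact ha ⟨(j : ℚ) / (k : ℚ), by push_cast; rw [haeq]⟩
  have hρε : |ρ| < ε := by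
    have h1 : (1 : ℝ) / (↑(N + 1) + 1) ≤ 1 / (↑N + 1) := by
      apply one_div_le_one_div_of_le
      · positivity
      · push_cast; linarith
    calc |ρ| ≤ 1 / (↑(N + 1) + 1) := hjk
      _ ≤ 1 / (↑N + 1) := h1
      _ < ε := hN
  obtain ⟨M, hM⟩ : ∃ M : ℤ, 0 ≤ (c + M) / ρ := by
    rcases lt_or_gt_of_ne hρ0 with hneg | hpos
    · refine ⟨-⌈c⌉, ?_⟩
      rw [div_nonneg_iff]
      right
      constructor
      · have := Int.le_ceil c
        push_cast
        linarith
      · exact hneg.le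
    · refine ⟨⌈-c⌉, div_nonneg ?_ hpos.le⟩
      have := Int.le_ceil (-c)
      linarith
  set C := c + (M : ℝ) with hC
  have h0 : (0 : ℤ) ≤ ⌊C / ρ⌋ := Int.le_floor.2 (by exact_mod_cast hM)
  set s : ℕ := ⌊C / ρ⌋.toNat with hs
  have hcast : ((s : ℕ) : ℝ) = ((⌊C / ρ⌋ : ℤ) : ℝ) := by
    rw [hs]
    exact_mod_cast congrArg (fun x : ℤ => (x : ℝ)) (Int.toNat_of_nonneg h0)
  have hfl1 : (s : ℝ) ≤ C / ρ := by rw [hcast]; exact Int.floor_le _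
  have hfl2 : C / ρ < (s : ℝ) + 1 := by rw [hcast]; exact Int.lt_floor_add_one _
  have hclose : |(s : ℝ) * ρ - C| < ε := by
    rcases lt_or_gt_of_ne hρ0 with hneg | hpos
    · have h1 : C ≤ (s : ℝ) * ρ := by
        rw [le_div_iff_of_neg hneg] at hfl1
        linarith
      have h2 : ((s : ℝ) + 1) * ρ < C := by
        rw [div_lt_iff_of_neg hneg] at hfl2
        linarith
      have habs : |ρ| = -ρ := _root_.abs_of_neg hneg
      rw [_root_.abs_of_nonneg (by linarith)]
      nlinarith
    · have h1 : (s : ℝ) * ρ ≤ C := by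
        rw [le_div_iff₀ hpos] at hfl1
        linarith
      have h2 : C < ((s : ℝ) + 1) * ρ := by
        rw [div_lt_iff₀ hpos] at hfl2
        linarith
      have habs : |ρ| = ρ := _root_.abs_of_pos hpos
      rw [_root_.abs_of_nonpos (by linarith)]
      nlinarith
  refine ⟨s * k.toNat, s * j + M, ?_⟩
  have hkc : ((k.toNat : ℕ) : ℝ) = (k : ℝ) := by
    exact_mod_cast congrArg (fun x : ℤ => (x : ℝ)) (Int.toNat_of_nonneg hk0.le)
  have heq : (↑(s * k.toNat) : ℝ) * a - ↑(s * j + M) - c = (s : ℝ) * ρ - C := by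
    push_cast [hkc]
    rw [hρ, hC]
    push_cast
    ring
  rw [heq]
  exact hclose

lemma abs_exp_sub (x y : ℝ) (n : ℤ) (h1 : |x - (y + 2 * π * n)| ≤ 1) :
    ‖Complex.exp ((x : ℂ) * Complex.I) - Complex.exp ((y : ℂ) * Complex.I)‖
      ≤ 2 * |x - (y + 2 * π * n)| := by
  have hy : Complex.exp (((y + 2 * π * n : ℝ) : ℂ) * Complex.I)
      = Complex.exp ((y : ℂ) * Complex.I) := by
    push_cast
    rw [add_mul, Complex.exp_add]
    have h2 : Complex.exp ((2 * (π : ℂ) * (n : ℂ)) * Complex.I) = 1 := by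
      rw [show (2 * (π : ℂ) * (n : ℂ)) * Complex.I = (n : ℂ) * (2 * (π : ℂ) * Complex.I) by ring]
      exact Complex.exp_int_mul_two_pi_mul_I n
    rw [h2, mul_one]
  have key : Complex.exp ((x : ℂ) * Complex.I)
      = Complex.exp ((y : ℂ) * Complex.I)
        * Complex.exp (((x - (y + 2 * π * n) : ℝ) : ℂ) * Complex.I) := by
    rw [← hy, ← Complex.exp_add]
    congr 1
    push_cast
    ring
  have habs : ‖((x - (y + 2 * π * n) : ℝ) : ℂ) * Complex.I‖
      = |x - (y + 2 * π * n)| := by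
    rw [norm_mul, Complex.norm_I, Complex.norm_real, Real.norm_eq_abs, mul_one]
  calc ‖Complex.exp ((x : ℂ) * Complex.I) - Complex.exp ((y : ℂ) * Complex.I)‖
      = ‖Complex.exp ((y : ℂ) * Complex.I)
          * (Complex.exp (((x - (y + 2 * π * n) : ℝ) : ℂ) * Complex.I) - 1)‖ := by
        rw [key]; congr 1; ring
    _ = ‖Complex.exp ((y : ℂ) * Complex.I)‖
          * ‖Complex.exp (((x - (y + 2 * π * n) : ℝ) : ℂ) * Complex.I) - 1‖ := by
        rw [norm_mul]
    _ = ‖Complex.exp (((x - (y + 2 * π * n) : ℝ) : ℂ) * Complex.I) - 1‖ := by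
        rw [Complex.norm_exp_ofReal_mul_I, one_mul]
    _ ≤ 2 * ‖((x - (y + 2 * π * n) : ℝ) : ℂ) * Complex.I‖ := by
        apply Complex.norm_exp_sub_one_le
        rw [habs]
        exact h1
    _ = 2 * |x - (y + 2 * π * n)| := by rw [habs]

end TCEaux

/-- **Invariant circles around periodic points.** If λ is irrational and p is a
k-periodic point of F whose orbit avoids ∂𝒫, then all sufficiently small unions
of circles around the orbit of p are F-invariant, and orbits on them are dense
iff m_1θ_1 + … + m_dθ_d is an irrational multiple of π. -/
theorem invariant_circles_around_periodic_points
    (d : ℕ) (hd : 1 ≤ d) (α : Fin d → ℝ) (hpos : ∀ j, 0 < α j) (hsum : ∑ k, α k < π)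
    (τ : Equiv.Perm (Fin d)) (lam eta : ℝ)
    (hlam : 0 < lam) (hirr : Irrational lam) (heta0 : 0 < eta) (hetal : eta < lam)
    (p : ℂ) (hp : 0 ≤ p.im) (k : ℕ) (hk : 1 ≤ k)
    (hper : (Fmap α τ lam eta)^[k] p = p)
    (hbd : ∀ j ≤ k, (Fmap α τ lam eta)^[j] p ∉ boundaryP α) :
    ∃ ε : ℝ, 0 < ε ∧ ∀ δ : ℝ, 0 < δ → δ < ε →
      (Fmap α τ lam eta '' orbitCircles α τ lam eta p k δ = orbitCircles α τ lam eta p k δ) ∧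
      ∀ z ∈ orbitCircles α τ lam eta p k δ,
        (closure (Set.range fun n : ℕ => (Fmap α τ lam eta)^[n] z)
            = orbitCircles α τ lam eta p k δ
          ↔ Irrational ((∑ j, (visitCount α τ lam eta p k j : ℝ) * theta α τ j) / π)) := by
  classical
  set F : ℂ → ℂ := Fmap α τ lam eta with hF
  set q : ℕ → ℂ := fun n => F^[n] p with hqdef
  have hk0 : 0 < k := hk
  have hqsucc : ∀ n, q (n + 1) = F (q n) := by
    intro n
    simp only [hqdef]
    exact Function.iterate_succ_apply' F n p
  have hqper : ∀ n, q (n + k) = q n := by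
    intro n
    simp only [hqdef]
    rw [Function.iterate_add_apply, hper]
  have q_mod : ∀ n, q n = q (n % k) := TCEaux.nat_mod_periodic q k hk0 hqper
  have qper_mul : ∀ (x t : ℕ), q (x + t * k) = q x := by
    intro x t
    induction t with
    | zero => simp
    | succ t ih =>
      have h1 : x + (t + 1) * k = x + t * k + k := by ring
      rw [h1, hqper, ih]
  have key : ∀ i : Fin k, ∃ ε > 0, ∀ z : ℂ, dist z (q i) < ε →
      F z = Complex.exp ((locRot α τ (q i) : ℂ) * Complex.I) * (z - q i) + q ((i : ℕ) + 1) := by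
    intro i
    have hbdi : q (i : ℕ) ∉ boundaryP α := by
      simp only [hqdef, hF]
      exact hbd i i.isLt.le
    obtain ⟨ε, hε, hloc⟩ := TCEaux.local_form (τ := τ) (lam := lam) (eta := eta)
      hd hpos hsum (q (i : ℕ)) hbdi
    rw [← hF] at hloc
    refine ⟨ε, hε, fun z hz => ?_⟩
    rw [hloc z hz, ← hqsucc]
  choose e he0 he1 using key
  haveI hnon : Nonempty (Fin k) := ⟨⟨0, hk0⟩⟩
  set ε := Finset.univ.inf' Finset.univ_nonempty e with hεdef
  have hεpos : 0 < ε := (Finset.lt_inf'_iff _).2 fun i _ => he0 i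
  have hεle : ∀ i : Fin k, ε ≤ e i := fun i => Finset.inf'_le e (Finset.mem_univ i)
  refine ⟨ε, hεpos, fun δ hδ0 hδε => ?_⟩
  set φ : ℕ → ℝ := fun i => locRot α τ (q (i % k)) with hφdef
  have step : ∀ (i : ℕ) (z : ℂ), dist z (q i) < ε →
      F z = Complex.exp ((φ i : ℂ) * Complex.I) * (z - q i) + q (i + 1) := by
    intro i z hz
    have him : i % k < k := Nat.mod_lt _ hk0
    have h1 : q i = q (i % k) := q_mod i
    have h2 : q (i + 1) = q (i % k + 1) := by
      rw [q_mod (i + 1), q_mod (i % k + 1), Nat.mod_add_mod]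
    rw [h1] at hz
    simp only [hφdef]
    rw [h1, h2]
    exact he1 ⟨i % k, him⟩ z (lt_of_lt_of_le hz (hεle ⟨i % k, him⟩))
  have iter : ∀ (z : ℂ) (r n : ℕ), dist z (q r) = δ →
      F^[n] z = Complex.exp (((∑ i ∈ Finset.range n, φ (r + i) : ℝ) : ℂ) * Complex.I)
        * (z - q r) + q (r + n) := by
    intro z r n hzr
    induction n with
    | zero => simp
    | succ n ih =>
      have hdist : dist (F^[n] z) (q (r + n)) = δ := by
        rw [ih, Complex.dist_eq]
        simp only [add_sub_cancel_right]
        rw [norm_mul, Complex.norm_exp_ofReal_mul_I, one_mul, ← Complex.dist_eq]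
        exact hzr
      have hlt : dist (F^[n] z) (q (r + n)) < ε := by rw [hdist]; exact hδε
      have harr : r + (n + 1) = r + n + 1 := by omega
      rw [Function.iterate_succ_apply', step (r + n) _ hlt, ih, Finset.sum_range_succ, harr]
      push_cast
      rw [add_mul, Complex.exp_add]
      ring
  have φper : ∀ i, φ (i + k) = φ i := by
    intro i
    simp only [hφdef, Nat.add_mod_right]
  have base : ∀ m : ℕ, ∑ i ∈ Finset.range k, φ (m + i) = ∑ i ∈ Finset.range k, φ i := by
    intro m
    induction m with
    | zero => simp
    | succ m ih =>
      have h2 : ∑ i ∈ Finset.range (k + 1), φ (m + i)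
          = (∑ i ∈ Finset.range k, φ (m + (i + 1))) + φ (m + 0) :=
        Finset.sum_range_succ' (fun i => φ (m + i)) k
      have h3 : ∑ i ∈ Finset.range (k + 1), φ (m + i)
          = (∑ i ∈ Finset.range k, φ (m + i)) + φ (m + k) :=
        Finset.sum_range_succ (fun i => φ (m + i)) k
      have h4 : φ (m + k) = φ (m + 0) := by rw [Nat.add_zero, φper]
      have h1 : ∑ i ∈ Finset.range k, φ (m + 1 + i) = ∑ i ∈ Finset.range k, φ (m + (i + 1)) := by
        apply Finset.sum_congr rfl
        intro i _
        congr 1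
        omega
      have h5 : ∑ i ∈ Finset.range k, φ (m + (i + 1)) = ∑ i ∈ Finset.range k, φ (m + i) := by
        linarith [h2, h3, h4]
      rw [h1, h5, ih]
  have chunk : ∀ (m t : ℕ), ∑ i ∈ Finset.range (t * k), φ (m + i)
      = (t : ℝ) * ∑ i ∈ Finset.range k, φ i := by
    intro m t
    induction t with
    | zero => simp
    | succ t ih =>
      have hsp : (t + 1) * k = t * k + k := by ring
      have h6 : ∑ i ∈ Finset.range (t * k + k), φ (m + i)
          = (∑ i ∈ Finset.range (t * k), φ (m + i)) + ∑ i ∈ Finset.range k, φ (m + (t * k + i)) :=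
        Finset.sum_range_add (fun i => φ (m + i)) (t * k) k
      have h7 : ∑ i ∈ Finset.range k, φ (m + (t * k + i))
          = ∑ i ∈ Finset.range k, φ (m + t * k + i) := by
        apply Finset.sum_congr rfl
        intro i _
        congr 1
        omega
      rw [hsp, h6, h7, base (m + t * k), ih]
      push_cast
      ring
  have hθsum : ∑ i ∈ Finset.range k, φ i
      = ∑ j : Fin d, (visitCount α τ lam eta p k j : ℝ) * theta α τ j := by
    have hφi : ∀ i ∈ Finset.range k, φ i
        = ∑ j : Fin d, (if q i ∈ Pmid α j then theta α τ j else 0) := by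
      intro i hi
      have hik := Finset.mem_range.1 hi
      have hmod : i % k = i := Nat.mod_eq_of_lt hik
      simp only [hφdef, hmod]
      by_cases hex : ∃ j, q i ∈ Pmid α j
      · obtain ⟨j0, hj0⟩ := hex
        rw [TCEaux.locRot_eq hpos hj0, Finset.sum_eq_single j0]
        · rw [if_pos hj0]
        · intro b _ hb
          rw [if_neg]
          intro hmem
          exact hb (TCEaux.Pmid_unique hpos hmem hj0)
        · intro hj0'
          exact absurd (Finset.mem_univ j0) hj0'
      · rw [TCEaux.locRot_eq_zero hex]
        symm
        apply Finset.sum_eq_zero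
        intro j _
        rw [if_neg (fun h => hex ⟨j, h⟩)]
    rw [Finset.sum_congr rfl hφi, Finset.sum_comm]
    apply Finset.sum_congr rfl
    intro j _
    rw [← Finset.sum_filter, Finset.sum_const, nsmul_eq_mul]
    congr 2
  have horb : orbitCircles α τ lam eta p k δ = ⋃ r ∈ Finset.range k, Metric.sphere (q r) δ := by
    simp only [orbitCircles, hqdef, hF]
  have sphere_step : ∀ r : ℕ, F '' Metric.sphere (q r) δ = Metric.sphere (q (r + 1)) δ := by
    intro r
    apply Set.Subset.antisymm
    · rintro w ⟨z, hz, rfl⟩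
      have hz' : dist z (q r) = δ := hz
      have hlt : dist z (q r) < ε := by rw [hz']; exact hδε
      show dist (F z) (q (r + 1)) = δ
      rw [step r z hlt, Complex.dist_eq]
      simp only [add_sub_cancel_right]
      rw [norm_mul, Complex.norm_exp_ofReal_mul_I, one_mul, ← Complex.dist_eq]
      exact hz'
    · intro w hw
      have hw' : dist w (q (r + 1)) = δ := hw
      have habs1 : ‖Complex.exp (-((φ r : ℝ) : ℂ) * Complex.I)‖ = 1 := by
        rw [show -((φ r : ℝ) : ℂ) = (((-(φ r) : ℝ)) : ℂ) by push_cast; ring]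
        exact Complex.norm_exp_ofReal_mul_I _
      have hz0 : dist (q r + Complex.exp (-((φ r : ℝ) : ℂ) * Complex.I) * (w - q (r + 1))) (q r)
          = δ := by
        rw [Complex.dist_eq]
        simp only [add_sub_cancel_left]
        rw [norm_mul, habs1, one_mul, ← Complex.dist_eq]
        exact hw'
      refine ⟨q r + Complex.exp (-((φ r : ℝ) : ℂ) * Complex.I) * (w - q (r + 1)), hz0, ?_⟩
      rw [step r _ (by rw [hz0]; exact hδε)]
      have hee : Complex.exp (((φ r : ℝ) : ℂ) * Complex.I)
          * Complex.exp (-((φ r : ℝ) : ℂ) * Complex.I) = 1 := by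
        rw [← Complex.exp_add,
          show ((φ r : ℝ) : ℂ) * Complex.I + -((φ r : ℝ) : ℂ) * Complex.I = 0 by ring,
          Complex.exp_zero]
      rw [show q r + Complex.exp (-((φ r : ℝ) : ℂ) * Complex.I) * (w - q (r + 1)) - q r
          = Complex.exp (-((φ r : ℝ) : ℂ) * Complex.I) * (w - q (r + 1)) by ring,
        ← mul_assoc, hee, one_mul]
      ring
  have himg : F '' orbitCircles α τ lam eta p k δ = orbitCircles α τ lam eta p k δ := by
    rw [horb, Set.image_iUnion₂]
    simp only [sphere_step]
    apply Set.Subset.antisymm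
    · intro x hx
      simp only [Set.mem_iUnion] at hx
      obtain ⟨r, hr, hx⟩ := hx
      simp only [Set.mem_iUnion]
      exact ⟨(r + 1) % k, Finset.mem_range.2 (Nat.mod_lt _ hk0), by rw [← q_mod]; exact hx⟩
    · intro x hx
      simp only [Set.mem_iUnion] at hx
      obtain ⟨m, hm, hx⟩ := hx
      simp only [Set.mem_iUnion]
      refine ⟨(m + k - 1) % k, Finset.mem_range.2 (Nat.mod_lt _ hk0), ?_⟩
      have hqe : q ((m + k - 1) % k + 1) = q m := by
        rw [q_mod ((m + k - 1) % k + 1), Nat.mod_add_mod,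
          show m + k - 1 + 1 = m + k by omega, Nat.add_mod_right, ← q_mod]
      rw [hqe]
      exact hx
  refine ⟨himg, ?_⟩
  intro z hz
  obtain ⟨r, hrk, hzr⟩ : ∃ r, r < k ∧ dist z (q r) = δ := by
    rw [horb] at hz
    simp only [Set.mem_iUnion] at hz
    obtain ⟨r, hr, hzr⟩ := hz
    exact ⟨r, Finset.mem_range.1 hr, hzr⟩
  have dist_iter : ∀ n, dist (F^[n] z) (q (r + n)) = δ := by
    intro n
    rw [iter z r n hzr, Complex.dist_eq]
    simp only [add_sub_cancel_right]
    rw [norm_mul, Complex.norm_exp_ofReal_mul_I, one_mul, ← Complex.dist_eq]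
    exact hzr
  have horbmem : ∀ n, F^[n] z ∈ orbitCircles α τ lam eta p k δ := by
    intro n
    rw [horb]
    simp only [Set.mem_iUnion]
    refine ⟨(r + n) % k, Finset.mem_range.2 (Nat.mod_lt _ hk0), ?_⟩
    show dist (F^[n] z) (q ((r + n) % k)) = δ
    rw [← q_mod]
    exact dist_iter n
  constructor
  · intro hcl
    by_contra hrat
    obtain ⟨qq, hqq⟩ : ∃ qq : ℚ, ((qq : ℝ))
        = (∑ j, (visitCount α τ lam eta p k j : ℝ) * theta α τ j) / π := not_not.1 hrat
    have hπ : (π : ℝ) ≠ 0 := Real.pi_ne_zero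
    have hΘval : ∑ i ∈ Finset.range k, φ i = qq * π := by
      rw [hθsum]
      field_simp at hqq
      linarith
    have h9 : ((qq : ℝ)) * ((qq.den : ℕ) : ℝ) = ((qq.num : ℤ) : ℝ) := by
      exact_mod_cast congrArg (fun x : ℚ => (x : ℝ)) (Rat.mul_den_eq_num qq)
    set Pn : ℕ := 2 * qq.den * k with hPdef
    have hPpos : 0 < Pn := by
      have := qq.pos
      positivity
    have hper2 : ∀ n, F^[n + Pn] z = F^[n] z := by
      intro n
      rw [iter z r (n + Pn) hzr, iter z r n hzr]
      have h6 : ∑ i ∈ Finset.range (n + Pn), φ (r + i)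
          = (∑ i ∈ Finset.range n, φ (r + i)) + ∑ i ∈ Finset.range Pn, φ (r + (n + i)) :=
        Finset.sum_range_add (fun i => φ (r + i)) n Pn
      have h7 : ∑ i ∈ Finset.range Pn, φ (r + (n + i))
          = ∑ i ∈ Finset.range ((2 * qq.den) * k), φ (r + n + i) := by
        rw [hPdef, show 2 * qq.den * k = (2 * qq.den) * k by ring]
        apply Finset.sum_congr rfl
        intro i _
        congr 1
        omega
      have hsplit : ∑ i ∈ Finset.range (n + Pn), φ (r + i)
          = (∑ i ∈ Finset.range n, φ (r + i))
            + (2 * (qq.den : ℝ)) * ∑ i ∈ Finset.range k, φ i := by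
        rw [h6, h7, chunk (r + n) (2 * qq.den)]
        push_cast
        ring
      have hqe : q (r + (n + Pn)) = q (r + n) := by
        rw [show r + (n + Pn) = r + n + Pn by omega, hPdef,
          show r + n + 2 * qq.den * k = r + n + (2 * qq.den) * k by ring, qper_mul]
      have h8 : (2 * (qq.den : ℝ)) * ∑ i ∈ Finset.range k, φ i = (qq.num : ℝ) * (2 * π) := by
        rw [hΘval]
        linear_combination 2 * π * h9
      have hexpeq : Complex.exp ((((∑ i ∈ Finset.range n, φ (r + i))
            + (2 * (qq.den : ℝ)) * ∑ i ∈ Finset.range k, φ i : ℝ) : ℂ) * Complex.I)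
          = Complex.exp (((∑ i ∈ Finset.range n, φ (r + i) : ℝ) : ℂ) * Complex.I) := by
        rw [Complex.ofReal_add, add_mul, Complex.exp_add, h8]
        have h10 : Complex.exp ((((qq.num : ℝ) * (2 * π) : ℝ) : ℂ) * Complex.I) = 1 := by
          rw [show ((((qq.num : ℝ) * (2 * π) : ℝ)) : ℂ) * Complex.I
              = (qq.num : ℂ) * (2 * (π : ℂ) * Complex.I) by push_cast; ring]
          exact Complex.exp_int_mul_two_pi_mul_I qq.num
        rw [h10, mul_one]
      rw [hsplit, hexpeq, hqe]
    have hper3 : ∀ n, F^[n] z = F^[n % Pn] z :=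
      TCEaux.nat_mod_periodic (fun n => F^[n] z) Pn hPpos hper2
    have hrange : Set.range (fun n : ℕ => F^[n] z)
        ⊆ (fun n : ℕ => F^[n] z) '' {i : ℕ | i < Pn} := by
      rintro x ⟨n, rfl⟩
      exact ⟨n % Pn, Nat.mod_lt _ hPpos, (hper3 n).symm⟩
    have hfin : (Set.range fun n : ℕ => F^[n] z).Finite :=
      Set.Finite.subset ((Set.finite_lt_nat Pn).image _) hrange
    have hcleq : closure (Set.range fun n : ℕ => F^[n] z)
        = Set.range fun n : ℕ => F^[n] z := hfin.isClosed.closure_eq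
    rw [hcleq] at hcl
    have hginj : Set.InjOn (fun t : ℝ => q 0 + (δ : ℂ) * Complex.exp ((t : ℂ) * Complex.I))
        (Set.Ioo 0 1) := by
      intro s hs t ht hst
      simp only at hst
      have hδne : (δ : ℂ) ≠ 0 := by
        simp only [ne_eq, Complex.ofReal_eq_zero]
        exact hδ0.ne'
      have h1 : Complex.exp ((s : ℂ) * Complex.I) = Complex.exp ((t : ℂ) * Complex.I) :=
        mul_left_cancel₀ hδne (add_left_cancel hst)
      obtain ⟨nn, hn⟩ := Complex.exp_eq_exp_iff_exists_int.1 h1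
      have h2 : (s : ℝ) = t + nn * (2 * π) := by
        have := congrArg Complex.im hn
        simpa using this
      have hn0 : nn = 0 := by
        by_contra hnz
        have h3 : (1 : ℝ) ≤ |(nn : ℝ)| := by exact_mod_cast Int.one_le_abs hnz
        have h5 : |(s : ℝ) - t| < 1 := by
          rw [abs_lt]
          constructor
          · linarith [hs.1, hs.2, ht.1, ht.2]
          · linarith [hs.1, hs.2, ht.1, ht.2]
        have h4 : |(s : ℝ) - t| = |(nn : ℝ)| * (2 * π) := by
          rw [h2, show t + (nn : ℝ) * (2 * π) - t = (nn : ℝ) * (2 * π) by ring, abs_mul,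
            _root_.abs_of_pos Real.two_pi_pos]
        nlinarith [Real.pi_gt_three]
      rw [hn0] at h2
      simp at h2
      linarith
    have himage : (fun t : ℝ => q 0 + (δ : ℂ) * Complex.exp ((t : ℂ) * Complex.I)) '' Set.Ioo 0 1
        ⊆ orbitCircles α τ lam eta p k δ := by
      rintro x ⟨t, _, rfl⟩
      rw [horb]
      simp only [Set.mem_iUnion]
      refine ⟨0, Finset.mem_range.2 hk0, ?_⟩
      show dist (q 0 + (δ : ℂ) * Complex.exp ((t : ℂ) * Complex.I)) (q 0) = δ
      rw [Complex.dist_eq]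
      simp only [add_sub_cancel_left]
      rw [norm_mul, Complex.norm_exp_ofReal_mul_I, Complex.norm_real, Real.norm_eq_abs,
        _root_.abs_of_pos hδ0, mul_one]
    have hSfin : (orbitCircles α τ lam eta p k δ).Finite := by
      rw [← hcl]
      exact hfin
    have himfin : ((fun t : ℝ => q 0 + (δ : ℂ) * Complex.exp ((t : ℂ) * Complex.I))
        '' Set.Ioo 0 1).Finite := hSfin.subset himage
    exact Set.not_injOn_infinite_finite_image (Set.Ioo_infinite (by norm_num)) himfin hginj
  · intro hirr2
    have hirrΘ : Irrational ((∑ i ∈ Finset.range k, φ i) / (2 * π)) := by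
      have he : (∑ i ∈ Finset.range k, φ i) / (2 * π)
          = ((∑ i ∈ Finset.range k, φ i) / π) / 2 := by
        rw [div_div]
        ring_nf
      rw [he]
      have h1 : Irrational ((∑ i ∈ Finset.range k, φ i) / π) := by
        rw [hθsum]
        exact hirr2
      have h2 := h1.div_natCast (m := 2) two_ne_zero
      simpa using h2
    apply Set.Subset.antisymm
    · apply closure_minimal
      · rintro x ⟨n, rfl⟩
        exact horbmem n
      · rw [horb]
        apply Set.Finite.isClosed_biUnion (Finset.finite_toSet _)
        intro i _
        exact Metric.isClosed_sphere
    · intro w hw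
      rw [horb] at hw
      simp only [Set.mem_iUnion] at hw
      obtain ⟨m, hm, hwm⟩ := hw
      have hmk := Finset.mem_range.1 hm
      have hwm' : dist w (q m) = δ := hwm
      rw [Metric.mem_closure_iff]
      intro ε' hε'
      have hδCw : ‖w - q m‖ = δ := by
        rw [← Complex.dist_eq]
        exact hwm'
      have hδCz : ‖z - q r‖ = δ := by
        rw [← Complex.dist_eq]
        exact hzr
      have hwq : w - q m = (δ : ℂ) * Complex.exp (((w - q m).arg : ℂ) * Complex.I) := by
        conv_lhs => rw [← Complex.norm_mul_exp_arg_mul_I (w - q m)]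
        rw [hδCw]
      have hzq : z - q r = (δ : ℂ) * Complex.exp (((z - q r).arg : ℂ) * Complex.I) := by
        conv_lhs => rw [← Complex.norm_mul_exp_arg_mul_I (z - q r)]
        rw [hδCz]
      set ψ : ℝ := (w - q m).arg with hψdef
      set b : ℝ := (z - q r).arg with hbdef
      set n0 : ℕ := m + k - r with hn0def
      have hrn0 : r + n0 = m + k := by
        rw [hn0def]
        omega
      set S0 : ℝ := ∑ i ∈ Finset.range n0, φ (r + i) with hS0def
      set Θ : ℝ := ∑ i ∈ Finset.range k, φ i with hΘdef
      have horb2 : ∀ t : ℕ, F^[n0 + t * k] z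
          = q m + (δ : ℂ) * Complex.exp (((b + S0 + (t : ℝ) * Θ : ℝ) : ℂ) * Complex.I) := by
        intro t
        rw [iter z r (n0 + t * k) hzr]
        have h6 : ∑ i ∈ Finset.range (n0 + t * k), φ (r + i)
            = (∑ i ∈ Finset.range n0, φ (r + i)) + ∑ i ∈ Finset.range (t * k), φ (r + (n0 + i)) :=
          Finset.sum_range_add (fun i => φ (r + i)) n0 (t * k)
        have h7 : ∑ i ∈ Finset.range (t * k), φ (r + (n0 + i))
            = ∑ i ∈ Finset.range (t * k), φ (r + n0 + i) := by
          apply Finset.sum_congr rfl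
          intro i _
          congr 1
          omega
        have h1 : ∑ i ∈ Finset.range (n0 + t * k), φ (r + i) = S0 + (t : ℝ) * Θ := by
          rw [h6, h7, chunk (r + n0) t, hS0def, hΘdef]
        have h2 : q (r + (n0 + t * k)) = q m := by
          rw [show r + (n0 + t * k) = r + n0 + t * k from (Nat.add_assoc r n0 (t * k)).symm,
            qper_mul, hrn0, hqper]
        rw [h1, h2, hzq]
        rw [show Complex.exp (((S0 + (t : ℝ) * Θ : ℝ) : ℂ) * Complex.I)
              * ((δ : ℂ) * Complex.exp ((b : ℂ) * Complex.I))
            = (δ : ℂ) * (Complex.exp (((S0 + (t : ℝ) * Θ : ℝ) : ℂ) * Complex.I)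
              * Complex.exp ((b : ℂ) * Complex.I)) by ring, ← Complex.exp_add]
        rw [show ((S0 + (t : ℝ) * Θ : ℝ) : ℂ) * Complex.I + (b : ℂ) * Complex.I
            = ((b + S0 + (t : ℝ) * Θ : ℝ) : ℂ) * Complex.I by push_cast; ring]
        ring
      have h2π := Real.two_pi_pos
      have hm1 : 0 < min 1 (ε' / (2 * δ + 1)) := lt_min one_pos (div_pos hε' (by linarith))
      obtain ⟨t, nn, htn⟩ := TCEaux.dense_mod_one hirrΘ ((ψ - (b + S0)) / (2 * π))
        (div_pos hm1 h2π)
      have hfield : (t : ℝ) * ((∑ i ∈ Finset.range k, φ i) / (2 * π)) - nn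
            - (ψ - (b + S0)) / (2 * π)
          = ((b + S0 + (t : ℝ) * Θ) - (ψ + 2 * π * nn)) / (2 * π) := by
        rw [hΘdef]
        field_simp
        ring
      rw [hfield, abs_div, _root_.abs_of_pos h2π] at htn
      have hb1 : |(b + S0 + (t : ℝ) * Θ) - (ψ + 2 * π * nn)| < min 1 (ε' / (2 * δ + 1)) :=
        (div_lt_div_iff_of_pos_right h2π).1 htn
      refine ⟨F^[n0 + t * k] z, ⟨n0 + t * k, rfl⟩, ?_⟩
      rw [horb2 t]
      have hwrep : w = q m + (δ : ℂ) * Complex.exp ((ψ : ℂ) * Complex.I) := by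
        rw [hψdef, ← hwq]
        ring
      rw [hwrep, Complex.dist_eq]
      rw [show q m + (δ : ℂ) * Complex.exp ((ψ : ℂ) * Complex.I)
            - (q m + (δ : ℂ) * Complex.exp (((b + S0 + (t : ℝ) * Θ : ℝ) : ℂ) * Complex.I))
          = (δ : ℂ) * (Complex.exp ((ψ : ℂ) * Complex.I)
            - Complex.exp (((b + S0 + (t : ℝ) * Θ : ℝ) : ℂ) * Complex.I)) by ring]
      rw [norm_mul, Complex.norm_real, Real.norm_eq_abs, _root_.abs_of_pos hδ0]
      have habs2 : |ψ - ((b + S0 + (t : ℝ) * Θ) + 2 * π * ((-nn : ℤ) : ℝ))|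
          = |(b + S0 + (t : ℝ) * Θ) - (ψ + 2 * π * nn)| := by
        rw [← abs_neg]
        congr 1
        push_cast
        ring
      have h1le : |ψ - ((b + S0 + (t : ℝ) * Θ) + 2 * π * ((-nn : ℤ) : ℝ))| ≤ 1 := by
        rw [habs2]
        exact hb1.le.trans (min_le_left _ _)
      have hexp := TCEaux.abs_exp_sub ψ (b + S0 + (t : ℝ) * Θ) (-nn) h1le
      have hv : |ψ - ((b + S0 + (t : ℝ) * Θ) + 2 * π * ((-nn : ℤ) : ℝ))| < ε' / (2 * δ + 1) := by
        rw [habs2]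
        exact lt_of_lt_of_le hb1 (min_le_right _ _)
      have hpos1 : (0 : ℝ) < 2 * δ + 1 := by linarith
      have hv2 : |ψ - ((b + S0 + (t : ℝ) * Θ) + 2 * π * ((-nn : ℤ) : ℝ))| * (2 * δ + 1) < ε' :=
        (lt_div_iff₀ hpos1).1 hv
      have hnn := abs_nonneg (ψ - ((b + S0 + (t : ℝ) * Θ) + 2 * π * ((-nn : ℤ) : ℝ)))
      calc δ * ‖Complex.exp ((ψ : ℂ) * Complex.I)
              - Complex.exp (((b + S0 + (t : ℝ) * Θ : ℝ) : ℂ) * Complex.I)‖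
          ≤ δ * (2 * |ψ - ((b + S0 + (t : ℝ) * Θ) + 2 * π * ((-nn : ℤ) : ℝ))|) :=
            mul_le_mul_of_nonneg_left hexp hδ0.le
        _ < ε' := by nlinarith


end
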